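/- For n divisible by 3, the maximum of q*(G) over 2-regular n-vertex graphs G equals 1 − 3/n, attained uniquely by the disjoint union of n/3 triangles with the connected-components partition. -/

import Mathlib

open Finset
open scoped Classical

variable {V : Type*} [Fintype V] [DecidableEq V]

/-- Number of edges of `G` inside vertex set `A` (as a real number). -/
noncomputable def eIn (G : SimpleGraph V) (A : Finset V) : ℝ :=
  (1/2) * ∑ u ∈ A, ∑ v ∈ A, if G.Adj u v then (1:ℝ) else 0

/-- Total number of edges of `G` (as a real number). -/
noncomputable def numEdges (G : SimpleGraph V) : ℝ := eIn G (univ : Finset V)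

/-- Degree of vertex `v` in `G` (as a real number). -/
noncomputable def degR (G : SimpleGraph V) (v : V) : ℝ :=
  ∑ u : V, if G.Adj v u then (1:ℝ) else 0

/-- Volume of vertex set `A`: sum of degrees of its vertices. -/
noncomputable def vol (G : SimpleGraph V) (A : Finset V) : ℝ := ∑ v ∈ A, degR G v

/-- Number of edges of `G` between `A` and its complement (as a real number). -/
noncomputable def eCross (G : SimpleGraph V) (A : Finset V) : ℝ :=
  ∑ u ∈ A, ∑ v ∈ (univ : Finset V) \ A, if G.Adj u v then (1:ℝ) else 0

/-- The modularity score of a vertex partition `P` of `G`. -/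
noncomputable def modScore (G : SimpleGraph V) (P : Finpartition (univ : Finset V)) : ℝ :=
  (∑ A ∈ P.parts, eIn G A) / numEdges G
    - (∑ A ∈ P.parts, (vol G A)^2) / (4 * (numEdges G)^2)

/-- The modularity of `G`: the supremum of modularity scores over all vertex partitions. -/
noncomputable def modularity (G : SimpleGraph V) : ℝ :=
  sSup { q : ℝ | ∃ P : Finpartition (univ : Finset V), q = modScore G P }

-- ordered adjacency pair count within A
noncomputable def Mnat (G : SimpleGraph V) (A : Finset V) : ℕ :=
  ∑ u ∈ A, ∑ v ∈ A, if G.Adj u v then 1 else 0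

lemma eIn_eq_Mnat (G : SimpleGraph V) (A : Finset V) :
    eIn G A = (Mnat G A : ℝ) / 2 := by
  simp only [eIn, Mnat, Nat.cast_sum, apply_ite (Nat.cast : ℕ → ℝ), Nat.cast_one, Nat.cast_zero]
  ring

lemma degR_eq (G : SimpleGraph V) (v : V) : degR G v = (G.degree v : ℝ) := by
  simp [degR, SimpleGraph.degree, SimpleGraph.neighborFinset_eq_filter, sum_boole,
    Finset.filter_filter]

lemma innerNat_le (G : SimpleGraph V) (hG : G.IsRegularOfDegree 2) (A : Finset V) (u : V) :
    (∑ v ∈ A, if G.Adj u v then 1 else 0) ≤ 2 := by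
  calc (∑ v ∈ A, if G.Adj u v then 1 else 0)
      ≤ ∑ v : V, if G.Adj u v then 1 else 0 :=
        Finset.sum_le_sum_of_subset (Finset.subset_univ A)
    _ = G.degree u := by
        simp [SimpleGraph.degree, SimpleGraph.neighborFinset_eq_filter, sum_boole]
    _ = 2 := hG u

lemma innerNat_eq_of_closed (G : SimpleGraph V) (A : Finset V) (u : V)
    (h : ∀ v, G.Adj u v → v ∈ A) :
    (∑ v ∈ A, if G.Adj u v then 1 else 0) = G.degree u := by
  have key : ∑ v ∈ A, (if G.Adj u v then (1:ℕ) else 0)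
      = ∑ v ∈ univ, (if G.Adj u v then (1:ℕ) else 0) := by
    refine Finset.sum_subset (Finset.subset_univ A) ?_
    intro v _ hv
    simp only [ite_eq_right_iff]
    intro hadj
    exact absurd (h v hadj) hv
  rw [key]
  simp [SimpleGraph.degree, SimpleGraph.neighborFinset_eq_filter, sum_boole]

lemma Mnat_le (G : SimpleGraph V) (hG : G.IsRegularOfDegree 2) (A : Finset V) :
    Mnat G A ≤ 2 * A.card := by
  calc Mnat G A ≤ ∑ _u ∈ A, 2 := Finset.sum_le_sum fun u _ => innerNat_le G hG A u
    _ = 2 * A.card := by rw [Finset.sum_const, smul_eq_mul, mul_comm]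

lemma Mnat_le' (G : SimpleGraph V) (A : Finset V) :
    Mnat G A ≤ A.card * (A.card - 1) := by
  have key : ∀ u ∈ A, (∑ v ∈ A, if G.Adj u v then (1:ℕ) else 0) ≤ A.card - 1 := by
    intro u hu
    calc (∑ v ∈ A, if G.Adj u v then (1:ℕ) else 0)
        = ∑ v ∈ A.erase u, if G.Adj u v then 1 else 0 := by
          refine (Finset.sum_subset (Finset.erase_subset _ _) ?_).symm
          intro v hv hv'
          have : v = u := by
            by_contra hne
            exact hv' (Finset.mem_erase.2 ⟨hne, hv⟩)
          simp [this]
      _ ≤ ∑ _v ∈ A.erase u, 1 := Finset.sum_le_sum fun v _ => by split <;> simp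
      _ = A.card - 1 := by rw [Finset.sum_const, smul_eq_mul, mul_one, Finset.card_erase_of_mem hu]
  calc Mnat G A ≤ ∑ _u ∈ A, (A.card - 1) := Finset.sum_le_sum key
    _ = A.card * (A.card - 1) := by rw [Finset.sum_const, smul_eq_mul]

lemma vol_eq (G : SimpleGraph V) (hG : G.IsRegularOfDegree 2) (A : Finset V) :
    vol G A = 2 * A.card := by
  simp only [vol]
  rw [Finset.sum_congr rfl fun v _ => by rw [degR_eq, hG v]]
  rw [Finset.sum_const, nsmul_eq_mul]
  push_cast; ring

lemma numEdges_eq (G : SimpleGraph V) (hG : G.IsRegularOfDegree 2) :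
    numEdges G = (Fintype.card V : ℝ) := by
  have h : ∀ u : V, (∑ v : V, if G.Adj u v then (1:ℝ) else 0) = 2 := by
    intro u
    have := degR_eq G u
    simp only [degR] at this
    rw [this, hG u]; norm_num
  simp only [numEdges, eIn]
  rw [Finset.sum_congr rfl fun u _ => h u, Finset.sum_const, nsmul_eq_mul, Finset.card_univ]
  ring
lemma part_bound {n : ℕ} (hn3 : 3 ≤ n) (G : SimpleGraph V) (hG : G.IsRegularOfDegree 2)
    {A : Finset V} (hA : A.Nonempty) :
    (Mnat G A : ℝ)/2 ≤ (A.card : ℝ) + (((A.card:ℝ))^2 - 3*(A.card:ℝ))/(n:ℝ) := by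
  have hn0 : (0:ℝ) < n := by positivity
  have hnR : (3:ℝ) ≤ n := by exact_mod_cast hn3
  have hk1 : 1 ≤ A.card := hA.card_pos
  rcases le_or_gt 3 A.card with h3 | h3
  · have hM : (Mnat G A : ℝ) ≤ 2 * A.card := by exact_mod_cast Mnat_le G hG A
    have hk3 : (3:ℝ) ≤ (A.card : ℝ) := by exact_mod_cast h3
    have h2 : 0 ≤ (((A.card:ℝ))^2 - 3*(A.card:ℝ))/(n:ℝ) :=
      div_nonneg (by nlinarith) (le_of_lt hn0)
    linarith
  · have hM : Mnat G A ≤ A.card * (A.card - 1) := Mnat_le' G A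
    interval_cases h : A.card
    · have : Mnat G A = 0 := by omega
      rw [this]
      have : (3:ℝ)/n ≤ 1 := by rw [div_le_one hn0]; linarith
      push_cast
      rw [one_pow]
      have h2 : (2:ℝ)/n ≤ 1 := by rw [div_le_one hn0]; linarith
      have : ((1:ℝ) - 3*1)/n = -(2/n) := by ring
      rw [this]
      linarith
    · have hM2 : (Mnat G A : ℝ) ≤ 2 := by exact_mod_cast (by omega : Mnat G A ≤ 2)
      have h2 : (2:ℝ)/n ≤ 1 := by rw [div_le_one hn0]; linarith
      have : ((2:ℝ)^2 - 3*2)/n = -(2/n) := by ring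
      push_cast
      rw [this]
      linarith

lemma part_bound_bad {n : ℕ} (hn3 : 3 ≤ n) (G : SimpleGraph V) (hG : G.IsRegularOfDegree 2)
    {A : Finset V} (hA : A.Nonempty) (hbad : ¬(A.card = 3 ∧ Mnat G A = 6)) :
    (Mnat G A : ℝ)/2 ≤ (A.card : ℝ) + (((A.card:ℝ))^2 - 3*(A.card:ℝ) - 1)/(n:ℝ) := by
  have hn0 : (0:ℝ) < n := by positivity
  have hnR : (3:ℝ) ≤ n := by exact_mod_cast hn3
  have hk1 : 1 ≤ A.card := hA.card_pos
  have h3n : (3:ℝ)/n ≤ 1 := by rw [div_le_one hn0]; linarith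
  have h1n : (1:ℝ)/n ≤ 1/2 := by
    rw [div_le_div_iff₀ hn0 (by norm_num)]; linarith
  rcases le_or_gt 4 A.card with h4 | h4
  · have hM : (Mnat G A : ℝ) ≤ 2 * A.card := by exact_mod_cast Mnat_le G hG A
    have hk4 : (4:ℝ) ≤ (A.card : ℝ) := by exact_mod_cast h4
    have h2 : 0 ≤ (((A.card:ℝ))^2 - 3*(A.card:ℝ) - 1)/(n:ℝ) :=
      div_nonneg (by nlinarith) (le_of_lt hn0)
    linarith
  · have hM' : Mnat G A ≤ A.card * (A.card - 1) := Mnat_le' G A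
    have hM2 : Mnat G A ≤ 2 * A.card := Mnat_le G hG A
    interval_cases h : A.card
    · have h0 : Mnat G A = 0 := by omega
      rw [h0]
      push_cast
      have : ((1:ℝ) - 3*1 - 1)/n = -(3/n) := by ring
      rw [one_pow, this]
      linarith
    · have h2 : (Mnat G A : ℝ) ≤ 2 := by exact_mod_cast (by omega : Mnat G A ≤ 2)
      push_cast
      have : ((2:ℝ)^2 - 3*2 - 1)/n = -(3/n) := by ring
      rw [this]
      linarith
    · have h5 : Mnat G A ≤ 5 := by
        rcases Nat.lt_or_ge (Mnat G A) 6 with h | h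
        · omega
        · exfalso; exact hbad ⟨rfl, by omega⟩
      have h5R : (Mnat G A : ℝ) ≤ 5 := by exact_mod_cast h5
      push_cast
      have : ((3:ℝ)^2 - 3*3 - 1)/n = -(1/n) := by ring
      rw [this]
      linarith
lemma core_ineq {x E S2 c : ℝ} (hx : 3 ≤ x) (hc : 0 ≤ c)
    (hE : E ≤ x + (S2 - 3*x - c)/x) :
    E/x - S2/x^2 ≤ 1 - 3/x - c/x^2 := by
  have hx0 : (0:ℝ) < x := by linarith
  have h1 : E/x ≤ (x + (S2 - 3*x - c)/x)/x := by gcongr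
  have h2 : (x + (S2 - 3*x - c)/x)/x = 1 + S2/x^2 - 3/x - c/x^2 := by
    field_simp; ring
  rw [h2] at h1
  linarith

lemma modScore_eq' {n : ℕ} (hn : Fintype.card V = n) (hn0 : 0 < n)
    (G : SimpleGraph V) (hG : G.IsRegularOfDegree 2) (P : Finpartition (univ : Finset V)) :
    modScore G P = (∑ A ∈ P.parts, (Mnat G A : ℝ)/2)/(n:ℝ)
      - (∑ A ∈ P.parts, ((A.card:ℝ))^2)/(n:ℝ)^2 := by
  have hne : numEdges G = n := by rw [numEdges_eq G hG, hn]
  simp only [modScore, hne]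
  congr 1
  · congr 1
    exact Finset.sum_congr rfl fun A _ => eIn_eq_Mnat G A
  · rw [Finset.sum_congr rfl fun A _ => by rw [vol_eq G hG A]]
    have h4 : ∑ A ∈ P.parts, (2*(A.card:ℝ))^2 = 4 * ∑ A ∈ P.parts, ((A.card:ℝ))^2 := by
      rw [Finset.mul_sum]
      exact Finset.sum_congr rfl fun A _ => by ring
    rw [h4]
    exact mul_div_mul_left _ _ (by norm_num)

lemma sum_card_parts_real {n : ℕ} (hn : Fintype.card V = n)
    (P : Finpartition (univ : Finset V)) :
    ∑ A ∈ P.parts, ((A.card:ℝ)) = (n:ℝ) := by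
  have h := P.sum_card_parts
  rw [Finset.card_univ, hn] at h
  exact_mod_cast h

lemma modScore_le {n : ℕ} (hn : Fintype.card V = n) (hn3 : 3 ≤ n)
    (G : SimpleGraph V) (hG : G.IsRegularOfDegree 2) (P : Finpartition (univ : Finset V)) :
    modScore G P ≤ 1 - 3/(n:ℝ) := by
  have hnR : (3:ℝ) ≤ (n:ℝ) := by exact_mod_cast hn3
  have hn0 : (0:ℝ) < n := by linarith
  rw [modScore_eq' hn (by omega) G hG P]
  have hE : ∑ A ∈ P.parts, (Mnat G A : ℝ)/2
      ≤ (n:ℝ) + ((∑ A ∈ P.parts, ((A.card:ℝ))^2) - 3*(n:ℝ) - 0)/(n:ℝ) := by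
    calc ∑ A ∈ P.parts, (Mnat G A : ℝ)/2
        ≤ ∑ A ∈ P.parts, ((A.card:ℝ) + (((A.card:ℝ))^2 - 3*(A.card:ℝ))/(n:ℝ)) :=
          Finset.sum_le_sum fun A hA =>
            part_bound hn3 G hG (P.nonempty_of_mem_parts hA)
      _ = (∑ A ∈ P.parts, ((A.card:ℝ)))
            + ((∑ A ∈ P.parts, ((A.card:ℝ))^2) - 3*(∑ A ∈ P.parts, ((A.card:ℝ))))/(n:ℝ) := by
          rw [Finset.sum_add_distrib, ← Finset.sum_div, Finset.sum_sub_distrib,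
            ← Finset.mul_sum]
      _ = (n:ℝ) + ((∑ A ∈ P.parts, ((A.card:ℝ))^2) - 3*(n:ℝ) - 0)/(n:ℝ) := by
          rw [sum_card_parts_real hn P]; ring_nf
  have := core_ineq hnR le_rfl hE
  simpa using this

lemma modScore_le_bad {n : ℕ} (hn : Fintype.card V = n) (hn3 : 3 ≤ n)
    (G : SimpleGraph V) (hG : G.IsRegularOfDegree 2) (P : Finpartition (univ : Finset V))
    {B : Finset V} (hB : B ∈ P.parts) (hbad : ¬(B.card = 3 ∧ Mnat G B = 6)) :
    modScore G P ≤ 1 - 3/(n:ℝ) - 1/(n:ℝ)^2 := by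
  have hnR : (3:ℝ) ≤ (n:ℝ) := by exact_mod_cast hn3
  have hn0 : (0:ℝ) < n := by linarith
  rw [modScore_eq' hn (by omega) G hG P]
  have hE : ∑ A ∈ P.parts, (Mnat G A : ℝ)/2
      ≤ (n:ℝ) + ((∑ A ∈ P.parts, ((A.card:ℝ))^2) - 3*(n:ℝ) - 1)/(n:ℝ) := by
    calc ∑ A ∈ P.parts, (Mnat G A : ℝ)/2
        ≤ ∑ A ∈ P.parts, ((A.card:ℝ)
            + (((A.card:ℝ))^2 - 3*(A.card:ℝ) - (if A = B then 1 else 0))/(n:ℝ)) := by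
          refine Finset.sum_le_sum fun A hA => ?_
          by_cases hAB : A = B
          · subst hAB
            simpa [if_pos] using part_bound_bad hn3 G hG (P.nonempty_of_mem_parts hA) hbad
          · simpa [hAB] using part_bound hn3 G hG (P.nonempty_of_mem_parts hA)
      _ = (∑ A ∈ P.parts, ((A.card:ℝ)))
            + ((∑ A ∈ P.parts, ((A.card:ℝ))^2) - 3*(∑ A ∈ P.parts, ((A.card:ℝ)))
              - (∑ A ∈ P.parts, if A = B then (1:ℝ) else 0))/(n:ℝ) := by
          rw [Finset.sum_add_distrib, ← Finset.sum_div, Finset.sum_sub_distrib,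
            Finset.sum_sub_distrib, ← Finset.mul_sum]
      _ = (n:ℝ) + ((∑ A ∈ P.parts, ((A.card:ℝ))^2) - 3*(n:ℝ) - 1)/(n:ℝ) := by
          rw [sum_card_parts_real hn P, Finset.sum_ite_eq' P.parts B (fun _ => (1:ℝ)),
            if_pos hB]
  exact core_ineq hnR (by norm_num) hE
lemma closed_of_good (G : SimpleGraph V) (hG : G.IsRegularOfDegree 2) {A : Finset V}
    (h3 : A.card = 3) (h6 : Mnat G A = 6) {u : V} (hu : u ∈ A) {w : V} (hw : G.Adj u w) :
    w ∈ A := by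
  have hin : (∑ v ∈ A, if G.Adj u v then (1:ℕ) else 0) = 2 := by
    by_contra hne
    have hlt : (∑ v ∈ A, if G.Adj u v then (1:ℕ) else 0) < 2 :=
      lt_of_le_of_ne (innerNat_le G hG A u) hne
    have hsum : Mnat G A < ∑ _v ∈ A, 2 :=
      Finset.sum_lt_sum (fun x _ => innerNat_le G hG A x) ⟨u, hu, hlt⟩
    rw [Finset.sum_const, h3] at hsum
    simp only [smul_eq_mul] at hsum
    omega
  by_contra hwA
  have hle : (∑ v ∈ insert w A, if G.Adj u v then (1:ℕ) else 0) ≤ 2 := innerNat_le G hG _ u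
  rw [Finset.sum_insert hwA, if_pos hw, hin] at hle
  omega

lemma walk_mem_of_closed (G : SimpleGraph V) {A : Finset V}
    (hclosed : ∀ x ∈ A, ∀ w, G.Adj x w → w ∈ A) :
    ∀ {x y : V}, G.Walk x y → x ∈ A → y ∈ A := by
  intro x y p
  induction p with
  | nil => exact id
  | cons h q ih => intro hx; exact ih (hclosed _ hx _ h)

lemma tri_of_all_good (G : SimpleGraph V) (hG : G.IsRegularOfDegree 2)
    (P : Finpartition (univ : Finset V))
    (hgood : ∀ A ∈ P.parts, A.card = 3 ∧ Mnat G A = 6) :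
    ∀ u v : V, G.Reachable u v → u = v ∨ G.Adj u v := by
  intro u v huv
  set A := P.part u with hAdef
  have hAp : A ∈ P.parts := P.part_mem.2 (mem_univ u)
  obtain ⟨h3, h6⟩ := hgood A hAp
  have hu : u ∈ A := P.mem_part (mem_univ u)
  have hclosed : ∀ x ∈ A, ∀ w, G.Adj x w → w ∈ A :=
    fun x hx w hxw => closed_of_good G hG h3 h6 hx hxw
  have hv : v ∈ A := by
    obtain ⟨p⟩ := huv
    exact walk_mem_of_closed G hclosed p hu
  have hsub : insert u (G.neighborFinset u) ⊆ A := by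
    intro x hx
    rcases Finset.mem_insert.1 hx with rfl | hx
    · exact hu
    · exact hclosed u hu x ((SimpleGraph.mem_neighborFinset _ _ _).1 hx)
  have hcard : (insert u (G.neighborFinset u)).card = 3 := by
    rw [Finset.card_insert_of_notMem (by simp),
      SimpleGraph.card_neighborFinset_eq_degree, hG u]
  have hEq : insert u (G.neighborFinset u) = A :=
    Finset.eq_of_subset_of_card_le hsub (by rw [hcard, h3])
  rw [← hEq] at hv
  rcases Finset.mem_insert.1 hv with rfl | hv
  · exact Or.inl rfl
  · exact Or.inr ((SimpleGraph.mem_neighborFinset _ _ _).1 hv)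

lemma good_partition (G : SimpleGraph V) (hG : G.IsRegularOfDegree 2)
    (hT : ∀ u v : V, G.Reachable u v → u = v ∨ G.Adj u v) :
    ∃ P : Finpartition (univ : Finset V), ∀ A ∈ P.parts, A.card = 3 ∧ Mnat G A = 6 := by
  refine ⟨Finpartition.ofSetoid G.reachableSetoid, ?_⟩
  intro A hA
  simp only [Finpartition.ofSetoid, Finpartition.ofSetSetoid_parts, Finset.mem_image] at hA
  obtain ⟨a, -, rfl⟩ := hA
  set A : Finset V := ({b | G.reachableSetoid.r a b} : Finset V) with hAdef
  have hmem : ∀ x, x ∈ A ↔ G.Reachable a x := by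
    intro x
    simp [hAdef, SimpleGraph.reachableSetoid]
    exact Iff.rfl
  have hclosed : ∀ x ∈ A, ∀ w, G.Adj x w → w ∈ A := by
    intro x hx w hxw
    rw [hmem] at hx ⊢
    exact hx.trans hxw.reachable
  have hAeq : A = insert a (G.neighborFinset a) := by
    ext x
    rw [hmem, Finset.mem_insert, SimpleGraph.mem_neighborFinset]
    constructor
    · intro h
      exact (hT a x h).imp Eq.symm id
    · rintro (rfl | h)
      · exact SimpleGraph.Reachable.refl x
      · exact h.reachable
  have h3 : A.card = 3 := by
    rw [hAeq, Finset.card_insert_of_notMem (by simp),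
      SimpleGraph.card_neighborFinset_eq_degree, hG a]
  refine ⟨h3, ?_⟩
  have h6 : Mnat G A = ∑ u ∈ A, G.degree u := by
    exact Finset.sum_congr rfl fun u hu => innerNat_eq_of_closed G A u (hclosed u hu)
  rw [h6, Finset.sum_congr rfl fun u _ => hG u, Finset.sum_const, h3]
  simp

lemma modScore_good {n : ℕ} (hn : Fintype.card V = n) (hn3 : 3 ≤ n)
    (G : SimpleGraph V) (hG : G.IsRegularOfDegree 2) (P : Finpartition (univ : Finset V))
    (hgood : ∀ A ∈ P.parts, A.card = 3 ∧ Mnat G A = 6) :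
    modScore G P = 1 - 3/(n:ℝ) := by
  have hnR : (3:ℝ) ≤ (n:ℝ) := by exact_mod_cast hn3
  have hn0 : (0:ℝ) < n := by linarith
  rw [modScore_eq' hn (by omega) G hG P]
  have h1 : ∑ A ∈ P.parts, (Mnat G A:ℝ)/2 = 3 * (P.parts.card : ℝ) := by
    rw [Finset.sum_congr rfl fun A hA => show (Mnat G A:ℝ)/2 = 3 by
      rw [(hgood A hA).2]; norm_num]
    rw [Finset.sum_const, nsmul_eq_mul, mul_comm]
  have h2 : ∑ A ∈ P.parts, ((A.card:ℝ))^2 = 9 * (P.parts.card : ℝ) := by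
    rw [Finset.sum_congr rfl fun A hA => show ((A.card:ℝ))^2 = 9 by
      rw [(hgood A hA).1]; norm_num]
    rw [Finset.sum_const, nsmul_eq_mul, mul_comm]
  have h3 : (3:ℝ) * (P.parts.card : ℝ) = n := by
    rw [← sum_card_parts_real hn P,
      Finset.sum_congr rfl fun A hA => show ((A.card:ℝ)) = 3 by rw [(hgood A hA).1]; norm_num]
    rw [Finset.sum_const, nsmul_eq_mul, mul_comm]
  rw [h1, h2]
  have h9 : (9:ℝ) * (P.parts.card : ℝ) = 3 * n := by linarith
  rw [h3, h9]
  field_simp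
section FinN

variable {n : ℕ}

lemma scoreSet_nonempty (h0 : 0 < n) (G : SimpleGraph (Fin n)) :
    { q : ℝ | ∃ P : Finpartition (univ : Finset (Fin n)), q = modScore G P }.Nonempty := by
  have : Nonempty (Fin n) := ⟨⟨0, h0⟩⟩
  have hne : (univ : Finset (Fin n)) ≠ ⊥ := by
    simpa using Finset.univ_nonempty.ne_empty
  exact ⟨modScore G (Finpartition.indiscrete hne), ⟨Finpartition.indiscrete hne, rfl⟩⟩

lemma scoreSet_bddAbove (hn3 : 3 ≤ n) (G : SimpleGraph (Fin n))
    (hG : G.IsRegularOfDegree 2) :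
    BddAbove { q : ℝ | ∃ P : Finpartition (univ : Finset (Fin n)), q = modScore G P } := by
  refine ⟨1 - 3/(n:ℝ), ?_⟩
  rintro q ⟨P, rfl⟩
  exact modScore_le (Fintype.card_fin n) hn3 G hG P

lemma modularity_le_bound (hn3 : 3 ≤ n) (G : SimpleGraph (Fin n))
    (hG : G.IsRegularOfDegree 2) :
    modularity G ≤ 1 - 3/(n:ℝ) := by
  refine csSup_le (scoreSet_nonempty (by omega) G) ?_
  rintro q ⟨P, rfl⟩
  exact modScore_le (Fintype.card_fin n) hn3 G hG P

lemma modularity_le_bad (hn3 : 3 ≤ n) (G : SimpleGraph (Fin n))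
    (hG : G.IsRegularOfDegree 2)
    (hT : ¬ ∀ u v : Fin n, G.Reachable u v → u = v ∨ G.Adj u v) :
    modularity G ≤ 1 - 3/(n:ℝ) - 1/(n:ℝ)^2 := by
  refine csSup_le (scoreSet_nonempty (by omega) G) ?_
  rintro q ⟨P, rfl⟩
  have hbad : ∃ B ∈ P.parts, ¬(B.card = 3 ∧ Mnat G B = 6) := by
    by_contra hall
    push_neg at hall
    exact hT (tri_of_all_good G hG P fun A hA => hall A hA)
  obtain ⟨B, hB, hbadB⟩ := hbad
  exact modScore_le_bad (Fintype.card_fin n) hn3 G hG P hB hbadB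

lemma modularity_eq_of_tri (hn3 : 3 ≤ n) (G : SimpleGraph (Fin n))
    (hG : G.IsRegularOfDegree 2)
    (hT : ∀ u v : Fin n, G.Reachable u v → u = v ∨ G.Adj u v) :
    modularity G = 1 - 3/(n:ℝ) := by
  refine le_antisymm (modularity_le_bound hn3 G hG) ?_
  obtain ⟨P, hgood⟩ := good_partition G hG hT
  have hscore := modScore_good (Fintype.card_fin n) hn3 G hG P hgood
  calc (1:ℝ) - 3/(n:ℝ) = modScore G P := hscore.symm
    _ ≤ modularity G := le_csSup (scoreSet_bddAbove hn3 G hG) ⟨P, rfl⟩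

/-- The disjoint union of triangles on `Fin n`: blocks of three consecutive vertices. -/
def triGraph (n : ℕ) : SimpleGraph (Fin n) where
  Adj u v := u ≠ v ∧ (u:ℕ)/3 = (v:ℕ)/3
  symm := ⟨by rintro u v ⟨h1, h2⟩; exact ⟨h1.symm, h2.symm⟩⟩
  loopless := ⟨by rintro u ⟨h, -⟩; exact h rfl⟩

@[simp] lemma triGraph_adj {u v : Fin n} :
    (triGraph n).Adj u v ↔ u ≠ v ∧ (u:ℕ)/3 = (v:ℕ)/3 := Iff.rfl

lemma triGraph_regular (hn : 3 ∣ n) : (triGraph n).IsRegularOfDegree 2 := by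
  obtain ⟨m, rfl⟩ := hn
  intro v
  have hv := v.isLt
  have hv3 : (v:ℕ)/3 < m := by omega
  have hb0 : 3*((v:ℕ)/3) < 3*m := by omega
  have hb1 : 3*((v:ℕ)/3)+1 < 3*m := by omega
  have hb2 : 3*((v:ℕ)/3)+2 < 3*m := by omega
  have hset : (triGraph (3*m)).neighborFinset v =
      ({⟨3*((v:ℕ)/3), hb0⟩, ⟨3*((v:ℕ)/3)+1, hb1⟩, ⟨3*((v:ℕ)/3)+2, hb2⟩} :
        Finset (Fin (3*m))).erase v := by
    ext u
    have hu := u.isLt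
    simp only [SimpleGraph.mem_neighborFinset, triGraph_adj, Finset.mem_erase,
      Finset.mem_insert, Finset.mem_singleton, ne_eq, Fin.ext_iff]
    omega
  have hvmem : v ∈ ({⟨3*((v:ℕ)/3), hb0⟩, ⟨3*((v:ℕ)/3)+1, hb1⟩, ⟨3*((v:ℕ)/3)+2, hb2⟩} :
      Finset (Fin (3*m))) := by
    simp only [Finset.mem_insert, Finset.mem_singleton, Fin.ext_iff]
    omega
  have hcard3 : ({⟨3*((v:ℕ)/3), hb0⟩, ⟨3*((v:ℕ)/3)+1, hb1⟩, ⟨3*((v:ℕ)/3)+2, hb2⟩} :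
      Finset (Fin (3*m))).card = 3 := by
    rw [Finset.card_insert_of_notMem
        (by simp only [Finset.mem_insert, Finset.mem_singleton, Fin.ext_iff]; omega),
      Finset.card_insert_of_notMem
        (by simp only [Finset.mem_singleton, Fin.ext_iff]; omega),
      Finset.card_singleton]
  rw [← SimpleGraph.card_neighborFinset_eq_degree, hset,
    Finset.card_erase_of_mem hvmem, hcard3]

lemma triGraph_tri : ∀ u v : Fin n, (triGraph n).Reachable u v → u = v ∨ (triGraph n).Adj u v := by
  have hblock : ∀ {x y : Fin n}, (triGraph n).Walk x y → (x:ℕ)/3 = (y:ℕ)/3 := by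
    intro x y p
    induction p with
    | nil => rfl
    | cons h q ih => exact h.2.trans ih
  intro u v ⟨p⟩
  by_cases huv : u = v
  · exact Or.inl huv
  · exact Or.inr ⟨huv, hblock p⟩

end FinN

/-- for `3 ∣ n`, the maximum modularity of a 2-regular `n`-vertex graph is
`1 - 3/n`, attained exactly by disjoint unions of triangles (every component is a
complete graph on 3 vertices). -/
theorem two_regular_max_modularity (n : ℕ) (h0 : 0 < n) (hn : 3 ∣ n) :
    (∀ G : SimpleGraph (Fin n), G.IsRegularOfDegree 2 →
        modularity G ≤ 1 - 3 / (n : ℝ))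
    ∧ (∃ G : SimpleGraph (Fin n), G.IsRegularOfDegree 2 ∧
        modularity G = 1 - 3 / (n : ℝ))
    ∧ (∀ G : SimpleGraph (Fin n), G.IsRegularOfDegree 2 →
        (modularity G = 1 - 3 / (n : ℝ) ↔
          ∀ u v : Fin n, G.Reachable u v → u = v ∨ G.Adj u v)) := by
  have hn3 : 3 ≤ n := Nat.le_of_dvd h0 hn
  refine ⟨fun G hG => modularity_le_bound hn3 G hG,
    ⟨triGraph n, triGraph_regular hn,
      modularity_eq_of_tri hn3 _ (triGraph_regular hn) triGraph_tri⟩,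
    fun G hG => ⟨?_, fun hT => modularity_eq_of_tri hn3 G hG hT⟩⟩
  intro heq
  by_contra hT
  have hlt := modularity_le_bad hn3 G hG hT
  rw [heq] at hlt
  have hnR : (0:ℝ) < n := by positivity
  have : (0:ℝ) < 1/(n:ℝ)^2 := by positivity
  linarith
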